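/- For each triple (a,b,c) of unit quaternions, the map F(p,q) = (apc⁻¹, bqc⁻¹) is an isometry of the nearly Kähler metric g on S³×S³. -/

import Mathlib

open Quaternion

noncomputable section

/-- The almost complex structure `J` at the point `(p, q)` of `S³ × S³`,
acting on `T_p S³ × T_q S³ ⊆ ℍ × ℍ`:
`J(U,V) = (1/√3)(2pq⁻¹V − U, −2qp⁻¹U + V)`. -/
def Jmap (p q : ℍ[ℝ]) (W : ℍ[ℝ] × ℍ[ℝ]) : ℍ[ℝ] × ℍ[ℝ] :=
  (Real.sqrt 3)⁻¹ •
    ((2 : ℝ) • (p * q⁻¹ * W.2) - W.1, -((2 : ℝ) • (q * p⁻¹ * W.1)) + W.2)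

/-- The almost product structure `P` at `(p, q)`: `P(U,V) = (pq⁻¹V, qp⁻¹U)`. -/
def Pmap (p q : ℍ[ℝ]) (W : ℍ[ℝ] × ℍ[ℝ]) : ℍ[ℝ] × ℍ[ℝ] :=
  (p * q⁻¹ * W.2, q * p⁻¹ * W.1)

/-- The product round metric on `S³ × S³` (on tangent pairs). -/
def prodInner (X Y : ℍ[ℝ] × ℍ[ℝ]) : ℝ :=
  (inner ℝ X.1 Y.1 : ℝ) + (inner ℝ X.2 Y.2 : ℝ)

/-- The nearly Kähler metric `g(X,Y) = (1/2)(⟨X,Y⟩ + ⟨JX,JY⟩)` at `(p,q)`. -/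
def gmet (p q : ℍ[ℝ]) (X Y : ℍ[ℝ] × ℍ[ℝ]) : ℝ :=
  (1 / 2) * (prodInner X Y + prodInner (Jmap p q X) (Jmap p q Y))

/-- The differential of `F(p,q) = (apc⁻¹, bqc⁻¹)` on tangent pairs. -/
def dF (a b c : ℍ[ℝ]) (W : ℍ[ℝ] × ℍ[ℝ]) : ℍ[ℝ] × ℍ[ℝ] :=
  (a * W.1 * c⁻¹, b * W.2 * c⁻¹)

lemma re_mul_comm (x y : ℍ[ℝ]) : (x*y).re = (y*x).re := by
  simp only [Quaternion.re_mul]; ring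

lemma normSq_unit {a : ℍ[ℝ]} (ha : ‖a‖ = 1) : Quaternion.normSq a = 1 := by
  rw [Quaternion.normSq_eq_norm_mul_self, ha]; norm_num

lemma inv_unit {a : ℍ[ℝ]} (ha : ‖a‖ = 1) : a⁻¹ = star a := by
  rw [Quaternion.inv_def, normSq_unit ha]; simp

lemma star_mul_self_unit {a : ℍ[ℝ]} (ha : ‖a‖ = 1) : star a * a = 1 := by
  rw [Quaternion.star_mul_self, normSq_unit ha]; simp

lemma inner_inv {a c : ℍ[ℝ]} (ha : ‖a‖ = 1) (hc : ‖c‖ = 1) (x y : ℍ[ℝ]) :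
    (inner ℝ (a * x * c⁻¹) (a * y * c⁻¹) : ℝ) = inner ℝ x y := by
  rw [Quaternion.inner_def, Quaternion.inner_def, inv_unit hc]
  have h1 : a * x * star c * star (a * y * star c) = a * (x * star y) * star a := by
    simp only [star_mul, star_star]
    calc a * x * star c * (c * (star y * star a))
        = a * x * (star c * c) * (star y * star a) := by noncomm_ring
      _ = a * (x * star y) * star a := by rw [star_mul_self_unit hc]; noncomm_ring
  rw [h1, re_mul_comm]
  rw [show star a * (a * (x * star y)) = star a * a * (x * star y) by noncomm_ring,
    star_mul_self_unit ha, one_mul]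

lemma norm_one_ne_zero {a : ℍ[ℝ]} (ha : ‖a‖ = 1) : a ≠ 0 := by
  intro h; simp [h] at ha

lemma Jcomm (a b c p q : ℍ[ℝ]) (ha : a ≠ 0) (hb : b ≠ 0) (hc : c ≠ 0)
    (hp : p ≠ 0) (hq : q ≠ 0) (W : ℍ[ℝ] × ℍ[ℝ]) :
    Jmap (a * p * c⁻¹) (b * q * c⁻¹) (dF a b c W) = dF a b c (Jmap p q W) := by
  have h1 : (a * p * c⁻¹) * (b * q * c⁻¹)⁻¹ = a * (p * q⁻¹) * b⁻¹ := by
    rw [mul_inv_rev, mul_inv_rev, inv_inv]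
    simp [mul_assoc, inv_mul_cancel_left₀ hc]
  have h2 : (b * q * c⁻¹) * (a * p * c⁻¹)⁻¹ = b * (q * p⁻¹) * a⁻¹ := by
    rw [mul_inv_rev, mul_inv_rev, inv_inv]
    simp [mul_assoc, inv_mul_cancel_left₀ hc]
  simp only [Jmap, dF, Prod.smul_mk, Prod.mk.injEq, h1, h2]
  constructor
  · simp only [smul_sub, smul_add, smul_neg, Algebra.mul_smul_comm,
      Algebra.smul_mul_assoc, mul_sub, sub_mul, mul_add, add_mul, neg_mul, mul_neg]
    congr 2
    rw [show a * (p * q⁻¹) * b⁻¹ * (b * W.2 * c⁻¹) = a * (p * q⁻¹) * (b⁻¹ * b) * (W.2 * c⁻¹) by noncomm_ring,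
      inv_mul_cancel₀ hb]
    noncomm_ring
  · simp only [smul_sub, smul_add, smul_neg, Algebra.mul_smul_comm,
      Algebra.smul_mul_assoc, mul_sub, sub_mul, mul_add, add_mul, neg_mul, mul_neg]
    congr 3
    rw [show b * (q * p⁻¹) * a⁻¹ * (a * W.1 * c⁻¹) = b * (q * p⁻¹) * (a⁻¹ * a) * (W.1 * c⁻¹) by noncomm_ring,
      inv_mul_cancel₀ ha]
    noncomm_ring

lemma prodInner_dF {a b c : ℍ[ℝ]} (ha : ‖a‖ = 1) (hb : ‖b‖ = 1) (hc : ‖c‖ = 1)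
    (X Y : ℍ[ℝ] × ℍ[ℝ]) :
    prodInner (dF a b c X) (dF a b c Y) = prodInner X Y := by
  simp only [prodInner, dF, inner_inv ha hc, inner_inv hb hc]

/-- `F(p,q) = (apc⁻¹, bqc⁻¹)` is an isometry of the nearly
Kähler metric `g`. -/
theorem stmt_6 (a b c p q : ℍ[ℝ]) (ha : ‖a‖ = 1) (hb : ‖b‖ = 1) (hc : ‖c‖ = 1)
    (hp : ‖p‖ = 1) (hq : ‖q‖ = 1) (X Y : ℍ[ℝ] × ℍ[ℝ]) :
    gmet (a * p * c⁻¹) (b * q * c⁻¹) (dF a b c X) (dF a b c Y) = gmet p q X Y := by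
  rw [gmet, gmet,
    Jcomm a b c p q (norm_one_ne_zero ha) (norm_one_ne_zero hb) (norm_one_ne_zero hc)
      (norm_one_ne_zero hp) (norm_one_ne_zero hq),
    Jcomm a b c p q (norm_one_ne_zero ha) (norm_one_ne_zero hb) (norm_one_ne_zero hc)
      (norm_one_ne_zero hp) (norm_one_ne_zero hq),
    prodInner_dF ha hb hc, prodInner_dF ha hb hc]
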